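/- Let B = (b_1, …, b_n) ∈ ℝ^{m×n} be a basis, let η ≥ 1, and let 1 ≤ d < n. If B_{[1,d]} is η^{d−1}-HSVP-reduced, B_{[d+1,n]} is η^{n−d−1}-HSVP-reduced, and ‖b_1‖ ≤ η^{2d}·‖b*_{d+1}‖, then B is η^{n−1}-HSVP-reduced, i.e., ‖b_1‖ ≤ η^{n−1}·vol(L(B))^{1/n}. -/

import Mathlib

open Matrix
open InnerProductSpace


noncomputable section

/-- Euclidean space `ℝ^m`. -/
abbrev Euc (m : ℕ) : Type := EuclideanSpace ℝ (Fin m)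

variable {m : ℕ}

/-- `projGS B s` is the orthogonal projection `π_{s+1}` onto the subspace orthogonal to
`b_1, …, b_s` (0-based: orthogonal to `B 0, …, B (s-1)`). -/
def projGS (B : ℕ → Euc m) (s : ℕ) (x : Euc m) : Euc m :=
  (Submodule.orthogonalProjectionOnto ((Submodule.span ℝ (B '' Set.Iio s))ᗮ) x : Euc m)

/-- The Gram–Schmidt vector `b*_{i+1}` (0-based index `i`). -/
def gsoVec (B : ℕ → Euc m) (i : ℕ) : Euc m := projGS B i (B i)

/-- The projected block `B_{[s+1, s+ℓ]}` (0-based start `s`; the length is supplied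
separately to the predicates below). -/
def block (B : ℕ → Euc m) (s : ℕ) : ℕ → Euc m := fun t => projGS B s (B (s + t))

/-- Gram matrix of the first `ℓ` vectors. -/
def gram (B : ℕ → Euc m) (ℓ : ℕ) : Matrix (Fin ℓ) (Fin ℓ) ℝ :=
  Matrix.of fun i j => (inner ℝ (B i) (B j) : ℝ)

/-- `vol(L(B)) = det(BᵀB)^{1/2}` for the first `ℓ` vectors. -/
def volB (B : ℕ → Euc m) (ℓ : ℕ) : ℝ := Real.sqrt (gram B ℓ).det

/-- The lattice generated by the first `ℓ` vectors. -/
def latticeSpan (B : ℕ → Euc m) (ℓ : ℕ) : Submodule ℤ (Euc m) :=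
  Submodule.span ℤ (B '' Set.Iio ℓ)

/-- `λ₁(L)`: the minimum norm of a nonzero lattice vector. -/
def lambda1 (L : Submodule ℤ (Euc m)) : ℝ :=
  sInf {r : ℝ | ∃ x ∈ L, x ≠ 0 ∧ ‖x‖ = r}

/-- `B` (of rank `ℓ`) is `δ`-SVP-reduced. -/
def SVPReduced (δ : ℝ) (B : ℕ → Euc m) (ℓ : ℕ) : Prop :=
  ‖B 0‖ ≤ δ * lambda1 (latticeSpan B ℓ)

/-- `B` (of rank `ℓ`) is `δ`-HSVP-reduced. -/
def HSVPReduced (δ : ℝ) (B : ℕ → Euc m) (ℓ : ℕ) : Prop :=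
  ‖B 0‖ ≤ δ * volB B ℓ ^ ((1 : ℝ) / ℓ)

/-- The dual basis `B^× = B (BᵀB)⁻¹` of the first `ℓ` vectors (extended by `0`). -/
def dualFam (B : ℕ → Euc m) (ℓ : ℕ) : ℕ → Euc m := fun i =>
  if h : i < ℓ then ∑ j : Fin ℓ, ((gram B ℓ)⁻¹ j ⟨i, h⟩) • B j else 0

/-- The reversed dual basis `B^{-s}`. -/
def revDual (B : ℕ → Euc m) (ℓ : ℕ) : ℕ → Euc m := fun i => dualFam B ℓ (ℓ - 1 - i)

/-- `B` (of rank `ℓ`) is `δ`-DHSVP-reduced: its reversed dual basis is `δ`-HSVP-reduced. -/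
def DHSVPReduced (δ : ℝ) (B : ℕ → Euc m) (ℓ : ℕ) : Prop :=
  HSVPReduced δ (revDual B ℓ) ℓ

/-- `B = (b_1, …, b_{d+1})` is `δ`-twin-reduced: `B_{[1,d]}` is `δ`-HSVP-reduced and
`B_{[2,d+1]}` is `δ`-DHSVP-reduced. -/
def TwinReduced (δ : ℝ) (B : ℕ → Euc m) (d : ℕ) : Prop :=
  HSVPReduced δ (block B 0) d ∧ DHSVPReduced δ (block B 1) d

/-- Gram–Schmidt coefficient `μ_{i,j}` (0-based). -/
def mu (B : ℕ → Euc m) (i j : ℕ) : ℝ :=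
  (inner ℝ (B i) (gsoVec B j) : ℝ) / ‖gsoVec B j‖ ^ 2

/-- The first `ℓ` vectors are size-reduced. -/
def SizeReduced (B : ℕ → Euc m) (ℓ : ℕ) : Prop :=
  ∀ i j, j < i → i < ℓ → |mu B i j| ≤ 1 / 2

/-- The first `ℓ` vectors are `ε`-LLL-reduced. -/
def LLLReduced (ε : ℝ) (B : ℕ → Euc m) (ℓ : ℕ) : Prop :=
  SizeReduced B ℓ ∧
    ∀ i, 0 < i → i < ℓ →
      ‖gsoVec B (i - 1)‖ ^ 2 ≤ (1 + ε) * ‖mu B i (i - 1) • gsoVec B (i - 1) + gsoVec B i‖ ^ 2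

/-- `B` (of rank `ℓ`) is `δ`-DSVP-reduced: its reversed dual basis is `δ`-SVP-reduced
and `B` is `(1/3)`-LLL-reduced. -/
def DSVPReduced (δ : ℝ) (B : ℕ → Euc m) (ℓ : ℕ) : Prop :=
  SVPReduced δ (revDual B ℓ) ℓ ∧ LLLReduced (1 / 3) B ℓ

/-- `γ` is an admissible Hermite bound for rank `r`: every lattice generated by `r`
linearly independent vectors of a Euclidean space satisfies `λ₁² ≤ γ · vol^{2/r}`. -/
def IsHermiteBound (γ : ℝ) (r : ℕ) : Prop :=
  ∀ (m' : ℕ) (v : ℕ → Euc m'), LinearIndependent ℝ (fun i : Fin r => v i) →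
    lambda1 (latticeSpan v r) ^ 2 ≤ γ * volB v r ^ ((2 : ℝ) / r)


lemma projGS_zero' (B : ℕ → Euc m) (x : Euc m) : projGS B 0 x = x := by
  have h0 : (Set.Iio 0 : Set ℕ) = ∅ := by ext t; simp
  simp [projGS, h0, Submodule.bot_orthogonal_eq_top, Submodule.starProjection_top]

lemma block_zero' (B : ℕ → Euc m) : block B 0 = B := by
  funext t; simp [block, projGS_zero']

lemma gsoVec_eq_gramSchmidt' (B : ℕ → Euc m) (i : ℕ) :
    gsoVec B i = gramSchmidt ℝ B i := by
  set gs := gramSchmidt ℝ B with hgs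
  set W := Submodule.span ℝ (B '' Set.Iio i) with hW
  have hWgs : W = Submodule.span ℝ (gs '' Set.Iio i) := (span_gramSchmidt_Iio ℝ B i).symm
  have hmem : gs i ∈ Wᗮ := by
    rw [hWgs, Submodule.mem_orthogonal]
    intro u hu
    induction hu using Submodule.span_induction with
    | mem x hx =>
      obtain ⟨j, hj, rfl⟩ := hx
      exact gramSchmidt_orthogonal ℝ B (ne_of_lt hj)
    | zero => simp
    | add x y _ _ hx hy => simp [inner_add_left, hx, hy]
    | smul c x _ hx => simp [inner_smul_left, hx]
  have hdiff : B i - gs i ∈ W := by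
    have := gramSchmidt_def ℝ B i
    have h2 : B i - gs i = ∑ j ∈ Finset.Iio i,
        (Submodule.orthogonalProjectionOnto (ℝ ∙ gs j) (B i) : Euc m) := by
      simp only [hgs]
      rw [this, sub_sub_cancel]; rfl
    rw [h2]
    refine Submodule.sum_mem _ fun j hj => ?_
    have hsub : (ℝ ∙ gs j) ≤ W := by
      rw [hWgs, Submodule.span_singleton_le_iff_mem]
      exact Submodule.subset_span ⟨j, Finset.mem_Iio.mp hj, rfl⟩
    exact hsub (SetLike.coe_mem _)
  have : (Submodule.orthogonalProjectionOnto Wᗮ (B i) : Euc m) = gs i := by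
    refine Submodule.eq_starProjection_of_mem_orthogonal hmem ?_
    exact Submodule.le_orthogonal_orthogonal W hdiff
  simpa [gsoVec, projGS] using this

lemma gram_det_eq' (B : ℕ → Euc m) (ℓ : ℕ) :
    (gram B ℓ).det = ∏ i : Fin ℓ, ‖gramSchmidt ℝ B i‖ ^ 2 := by
  set gs := gramSchmidt ℝ B with hgs
  set c : ℕ → ℕ → ℝ := fun i j =>
    if j = i then 1 else if j < i then (inner ℝ (gs j) (B i) : ℝ) / ‖gs j‖ ^ 2 else 0 with hc
  have hrepr : ∀ i : ℕ, i < ℓ → B i = ∑ j ∈ Finset.range ℓ, c i j • gs j := by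
    intro i hi
    have h1 : B i = ∑ j ∈ Finset.range (i + 1), c i j • gs j := by
      rw [Finset.sum_range_succ]
      have : c i i = 1 := by simp [hc]
      rw [this, one_smul]
      have h2 := gramSchmidt_def'' ℝ B i
      rw [h2, add_comm]
      congr 1
      rw [Nat.Iio_eq_range]
      refine Finset.sum_congr rfl fun j hj => ?_
      have hji : j < i := Finset.mem_range.mp hj
      simp [hc, hji, hji.ne, real_inner_comm, hgs]
    rw [h1]
    refine Finset.sum_subset (Finset.range_subset_range.mpr hi) fun j _ hj => ?_
    have hj2 : ¬ j ≤ i := by simpa using hj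
    simp only [hc]
    rw [if_neg (by omega : ¬ j = i), if_neg (by omega : ¬ j < i), zero_smul]
  set M : Matrix (Fin ℓ) (Fin ℓ) ℝ := Matrix.of fun i j => c i j with hM
  set D : Matrix (Fin ℓ) (Fin ℓ) ℝ := Matrix.diagonal fun j => ‖gs (j : ℕ)‖ ^ 2 with hD
  have hfact : gram B ℓ = M * D * Mᵀ := by
    ext i k
    have hBi' : B (i : ℕ) = ∑ j : Fin ℓ, c i j • gs j := by
      rw [hrepr i i.isLt, ← Fin.sum_univ_eq_sum_range (fun j => c i j • gs j) ℓ]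
    have hBk' : B (k : ℕ) = ∑ j : Fin ℓ, c k j • gs j := by
      rw [hrepr k k.isLt, ← Fin.sum_univ_eq_sum_range (fun j => c k j • gs j) ℓ]
    have : (inner ℝ (B (i : ℕ)) (B (k : ℕ)) : ℝ)
        = ∑ j : Fin ℓ, c i j * c k j * ‖gs (j : ℕ)‖ ^ 2 := by
      rw [hBi', hBk', sum_inner]
      refine Finset.sum_congr rfl fun j _ => ?_
      rw [inner_sum]
      rw [Finset.sum_eq_single j]
      · rw [real_inner_smul_left, real_inner_smul_right, real_inner_self_eq_norm_sq]
        ring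
      · intro j' _ hj'
        rw [real_inner_smul_left, real_inner_smul_right,
          gramSchmidt_orthogonal ℝ B (Fin.val_ne_of_ne hj'.symm)]
        ring
      · intro h; exact absurd (Finset.mem_univ j) h
    simp only [_root_.gram, Matrix.of_apply, this]
    rw [Matrix.mul_apply]
    refine Finset.sum_congr rfl fun j _ => ?_
    rw [Matrix.mul_diagonal, Matrix.transpose_apply]
    simp [hM]
    ring
  have hMtri : M.BlockTriangular OrderDual.toDual := by
    intro i j hij
    have : (i : ℕ) < (j : ℕ) := hij
    show c i j = 0
    simp only [hc]
    rw [if_neg (by omega : ¬ (j:ℕ) = (i:ℕ)), if_neg (by omega : ¬ (j:ℕ) < (i:ℕ))]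
  have hdetM : M.det = 1 := by
    rw [Matrix.det_of_lowerTriangular M hMtri]
    simp [hM, hc]
  rw [hfact, Matrix.det_mul, Matrix.det_mul, Matrix.det_transpose, hdetM,
    Matrix.det_diagonal]
  simp

lemma volB_eq_prod' (B : ℕ → Euc m) (ℓ : ℕ) :
    volB B ℓ = ∏ i ∈ Finset.range ℓ, ‖gsoVec B i‖ := by
  rw [volB, gram_det_eq']
  have : ∀ i : Fin ℓ, ‖gramSchmidt ℝ B (i : ℕ)‖ ^ 2 = ‖gsoVec B (i : ℕ)‖ ^ 2 := by
    intro i; rw [gsoVec_eq_gramSchmidt']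
  rw [Finset.prod_congr rfl fun i _ => this i, Finset.prod_pow,
    Real.sqrt_sq (Finset.prod_nonneg fun i _ => norm_nonneg _)]
  exact Fin.prod_univ_eq_prod_range (fun i => ‖gsoVec B i‖) ℓ

lemma gsoVec_block' (B : ℕ → Euc m) (d i : ℕ) :
    gsoVec (block B d) i = gsoVec B (d + i) := by
  set W := Submodule.span ℝ (B '' Set.Iio d) with hW
  set S := Submodule.span ℝ (block B d '' Set.Iio i) with hS
  set T := Submodule.span ℝ (B '' Set.Iio (d + i)) with hT
  have hproj : ∀ y : Euc m, (Submodule.orthogonalProjectionOnto Wᗮ y : Euc m)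
      = y - Submodule.orthogonalProjectionOnto W y := fun y => Submodule.starProjection_orthogonal_val y
  have hSW : S ≤ Wᗮ := by
    rw [hS, Submodule.span_le]
    rintro _ ⟨j, -, rfl⟩
    exact SetLike.coe_mem _
  have hWT : W ≤ T := Submodule.span_mono (Set.image_mono (Set.Iio_subset_Iio (by omega)))
  have hsup : W ⊔ S = T := by
    apply le_antisymm
    · refine sup_le hWT ?_
      rw [hS, Submodule.span_le]
      rintro _ ⟨j, hj, rfl⟩
      have : block B d j = B (d + j) - Submodule.orthogonalProjectionOnto W (B (d + j)) := hproj _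
      rw [this]
      exact Submodule.sub_mem _
        (Submodule.subset_span ⟨d + j, by simpa using hj, rfl⟩)
        (hWT (SetLike.coe_mem _))
    · rw [hT, Submodule.span_le]
      rintro _ ⟨t, ht, rfl⟩
      simp only [Set.mem_Iio] at ht
      by_cases htd : t < d
      · exact le_sup_left (α := Submodule ℝ (Euc m))
          (Submodule.subset_span ⟨t, htd, rfl⟩ : B t ∈ W)
      · push_neg at htd
        obtain ⟨j, rfl⟩ : ∃ j, t = d + j := ⟨t - d, by omega⟩
        have hji : j < i := by omega
        have hdec : B (d + j) = block B d j + (Submodule.orthogonalProjectionOnto W (B (d + j)) : Euc m) := by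
          rw [show block B d j = (Submodule.orthogonalProjectionOnto Wᗮ (B (d + j)) : Euc m) from rfl, hproj]
          abel
        rw [hdec]
        exact Submodule.add_mem _
          (le_sup_right (α := Submodule ℝ (Euc m)) (Submodule.subset_span ⟨j, hji, rfl⟩))
          (le_sup_left (α := Submodule ℝ (Euc m)) (SetLike.coe_mem _))
  set x : Euc m := (Submodule.orthogonalProjectionOnto Wᗮ (B (d + i)) : Euc m) with hx
  have hxW : x ∈ Wᗮ := SetLike.coe_mem _
  set v : Euc m := (Submodule.orthogonalProjectionOnto Sᗮ x : Euc m) with hv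
  have hvS : v ∈ Sᗮ := SetLike.coe_mem _
  have hvx : v = x - Submodule.orthogonalProjectionOnto S x := Submodule.starProjection_orthogonal_val x
  have hvW : v ∈ Wᗮ := by
    rw [hvx]
    exact Submodule.sub_mem _ hxW (hSW (SetLike.coe_mem _))
  have hvT : v ∈ Tᗮ := by
    rw [← hsup, ← Submodule.inf_orthogonal]
    exact ⟨hvW, hvS⟩
  have hrest : B (d + i) - v ∈ T := by
    have : B (d + i) - v = (Submodule.orthogonalProjectionOnto W (B (d + i)) : Euc m)
        + (Submodule.orthogonalProjectionOnto S x : Euc m) := by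
      rw [hvx, hx, hproj]
      abel
    rw [this, ← hsup]
    exact Submodule.add_mem _
      (le_sup_left (α := Submodule ℝ (Euc m)) (SetLike.coe_mem _))
      (le_sup_right (α := Submodule ℝ (Euc m)) (SetLike.coe_mem _))
  have hmain : (Submodule.orthogonalProjectionOnto Tᗮ (B (d + i)) : Euc m) = v :=
    Submodule.eq_starProjection_of_mem_orthogonal hvT
      (Submodule.le_orthogonal_orthogonal T hrest)
  show (Submodule.orthogonalProjectionOnto Sᗮ (block B d i) : Euc m)
      = (Submodule.orthogonalProjectionOnto Tᗮ (B (d + i)) : Euc m)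
  rw [hmain]
  rfl


set_option maxHeartbeats 1000000 in
/-- gluing lemma, HSVP part. -/
theorem gluing_hsvp {m n d : ℕ} (hd1 : 1 ≤ d) (hdn : d < n) {η : ℝ} (hη : 1 ≤ η)
    (B : ℕ → Euc m) (hB : LinearIndependent ℝ (fun i : Fin n => B i))
    (hblock1 : HSVPReduced (η ^ (d - 1)) (block B 0) d)
    (hblock2 : HSVPReduced (η ^ (n - d - 1)) (block B d) (n - d))
    (hfirst : ‖B 0‖ ≤ η ^ (2 * d) * ‖gsoVec B d‖) :
    ‖B 0‖ ≤ η ^ (n - 1) * volB B n ^ ((1 : ℝ) / n) := by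
  have hη0 : (0 : ℝ) < η := lt_of_lt_of_le one_pos hη
  obtain ⟨k, rfl⟩ : ∃ k, n = d + k := ⟨n - d, by omega⟩
  have hk1 : 1 ≤ k := by omega
  set a : ℕ → ℝ := fun i => ‖gsoVec B i‖ with ha
  set P₁ : ℝ := ∏ i ∈ Finset.range d, a i with hP1def
  set P₂ : ℝ := ∏ i ∈ Finset.range k, a (d + i) with hP2def
  have hP1 : (0 : ℝ) ≤ P₁ := Finset.prod_nonneg fun i _ => norm_nonneg _
  have hP2 : (0 : ℝ) ≤ P₂ := Finset.prod_nonneg fun i _ => norm_nonneg _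
  -- rewrite the hypotheses
  have hv1 : volB B d = P₁ := volB_eq_prod' B d
  have hv2 : volB (block B d) k = P₂ := by
    rw [volB_eq_prod' (block B d) k]
    exact Finset.prod_congr rfl fun i _ => by rw [gsoVec_block']
  have hvn : volB B (d + k) = P₁ * P₂ := by
    rw [volB_eq_prod' B (d + k), Finset.prod_range_add]
  have h1 : ‖B 0‖ ≤ η ^ (d - 1) * P₁ ^ ((1 : ℝ) / d) := by
    have := hblock1
    rw [HSVPReduced, block_zero'] at this
    rwa [hv1] at this
  rw [show d + k - d = k from by omega] at hblock2
  have h2 : a d ≤ η ^ (k - 1) * P₂ ^ ((1 : ℝ) / k) := by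
    have := hblock2
    rw [HSVPReduced, hv2] at this
    have hb0 : block B d 0 = gsoVec B d := by
      simp [block, gsoVec]
    rwa [hb0] at this
  have h3 : ‖B 0‖ ≤ η ^ (2 * d) * a d := hfirst
  -- raise to powers
  have hb0 : (0 : ℝ) ≤ ‖B 0‖ := norm_nonneg _
  have had0 : (0 : ℝ) ≤ a d := norm_nonneg _
  have hrp : ∀ (P : ℝ) (r : ℕ), 0 ≤ P → r ≠ 0 → (P ^ ((1 : ℝ) / r)) ^ r = P := by
    intro P r hP hr
    rw [← Real.rpow_natCast (P ^ ((1 : ℝ) / r)) r, ← Real.rpow_mul hP,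
      one_div, inv_mul_cancel₀ (by exact_mod_cast hr), Real.rpow_one]
  have hbd : ‖B 0‖ ^ d ≤ η ^ ((d - 1) * d) * P₁ := by
    calc ‖B 0‖ ^ d ≤ (η ^ (d - 1) * P₁ ^ ((1 : ℝ) / d)) ^ d :=
          pow_le_pow_left₀ hb0 h1 d
      _ = η ^ ((d - 1) * d) * P₁ := by
          rw [mul_pow, ← pow_mul, hrp P₁ d hP1 (by omega)]
  have hak : a d ^ k ≤ η ^ ((k - 1) * k) * P₂ := by
    calc a d ^ k ≤ (η ^ (k - 1) * P₂ ^ ((1 : ℝ) / k)) ^ k :=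
          pow_le_pow_left₀ had0 h2 k
      _ = η ^ ((k - 1) * k) * P₂ := by
          rw [mul_pow, ← pow_mul, hrp P₂ k hP2 (by omega)]
  have hbk : ‖B 0‖ ^ k ≤ η ^ (2 * d * k) * (η ^ ((k - 1) * k) * P₂) := by
    calc ‖B 0‖ ^ k ≤ (η ^ (2 * d) * a d) ^ k := pow_le_pow_left₀ hb0 h3 k
      _ = η ^ (2 * d * k) * a d ^ k := by rw [mul_pow, ← pow_mul]
      _ ≤ η ^ (2 * d * k) * (η ^ ((k - 1) * k) * P₂) := by
          apply mul_le_mul_of_nonneg_left hak (by positivity)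
  have hbn : ‖B 0‖ ^ (d + k) ≤ η ^ ((d + k) * (d + k - 1)) * (P₁ * P₂) := by
    have hmul : ‖B 0‖ ^ (d + k)
        ≤ (η ^ ((d - 1) * d) * P₁) * (η ^ (2 * d * k) * (η ^ ((k - 1) * k) * P₂)) := by
      rw [pow_add]
      exact mul_le_mul hbd hbk (pow_nonneg hb0 k)
        (mul_nonneg (pow_nonneg hη0.le _) hP1)
    refine hmul.trans (le_of_eq ?_)
    obtain ⟨e, rfl⟩ : ∃ e, d = e + 1 := ⟨d - 1, by omega⟩
    obtain ⟨j, rfl⟩ : ∃ j, k = j + 1 := ⟨k - 1, by omega⟩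
    have e1 : (e + 1) - 1 = e := by omega
    have e2 : (j + 1) - 1 = j := by omega
    have e3 : (e + 1 + (j + 1)) - 1 = e + j + 1 := by omega
    rw [e1, e2, e3,
      show (e + 1 + (j + 1)) * (e + j + 1)
        = e * (e + 1) + (2 * (e + 1) * (j + 1) + j * (j + 1)) from by ring,
      pow_add, pow_add]
    ring
  -- conclude
  have hvol0 : (0 : ℝ) ≤ volB B (d + k) := Real.sqrt_nonneg _
  refine le_of_pow_le_pow_left₀ (n := d + k) (by omega)
    (mul_nonneg (pow_nonneg hη0.le _) (Real.rpow_nonneg hvol0 _)) ?_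
  rw [mul_pow, ← pow_mul, hvn, hrp (P₁ * P₂) (d + k) (mul_nonneg hP1 hP2) (by omega)]
  exact hbn.trans (le_of_eq (by rw [mul_comm (d + k - 1) (d + k)]))


end
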